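/- Let Σ be a fan in ℝ^d and v a nonzero lattice point in the support |Σ|. Then the star subdivision Σ*(v) is again a fan, its support equals |Σ|, and every cone of Σ*(v) is contained in some cone of Σ (i.e., Σ*(v) is a refinement of Σ). -/

import Mathlib

open Set Pointwise

noncomputable section

/-- The standard dot product pairing on `Fin d → ℝ`. -/
def dotR {d : ℕ} (m v : Fin d → ℝ) : ℝ := ∑ i, m i * v i

/-- The cast of an integer lattice vector to a real vector. -/
def zCast {d : ℕ} (u : Fin d → ℤ) : Fin d → ℝ := fun i => (u i : ℝ)

/-- The convex cone generated by finitely many vectors `v 0, …, v (s-1)`: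
all nonnegative real combinations. -/
def coneOf {d s : ℕ} (v : Fin s → Fin d → ℝ) : Set (Fin d → ℝ) :=
  {x | ∃ c : Fin s → ℝ, (∀ i, 0 ≤ c i) ∧ x = ∑ i, c i • v i}

/-- The dual cone of a set `σ`: all `m` pairing nonnegatively with every element of `σ`. -/
def dualCone {d : ℕ} (σ : Set (Fin d → ℝ)) : Set (Fin d → ℝ) :=
  {m | ∀ v ∈ σ, 0 ≤ dotR m v}

/-- A rational polyhedral cone: generated by finitely many lattice vectors. -/
def IsRatPolyCone {d : ℕ} (σ : Set (Fin d → ℝ)) : Prop :=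
  ∃ (s : ℕ) (v : Fin s → Fin d → ℤ), σ = coneOf fun i => zCast (v i)

/-- A face of a cone `σ`: the zero locus in `σ` of a linear functional that is
nonnegative on `σ`. -/
def IsFaceOf {d : ℕ} (F σ : Set (Fin d → ℝ)) : Prop :=
  ∃ m : Fin d → ℝ, (∀ x ∈ σ, 0 ≤ dotR m x) ∧ F = {x ∈ σ | dotR m x = 0}

/-- A fan: a finite collection of strongly convex rational polyhedral cones, closed
under taking faces, such that the intersection of any two cones is a face of each. -/
def IsFan {d : ℕ} (𝒮 : Set (Set (Fin d → ℝ))) : Prop :=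
  𝒮.Finite ∧
  (∀ σ ∈ 𝒮, IsRatPolyCone σ ∧ σ ∩ (-σ) = {0}) ∧
  (∀ σ ∈ 𝒮, ∀ F, IsFaceOf F σ → F ∈ 𝒮) ∧
  (∀ σ₁ ∈ 𝒮, ∀ σ₂ ∈ 𝒮, IsFaceOf (σ₁ ∩ σ₂) σ₁ ∧ IsFaceOf (σ₁ ∩ σ₂) σ₂)

/-- `Cone(τ, v)`: the cone generated by a cone `τ` together with a vector `v`. -/
def coneJoin {d : ℕ} (τ : Set (Fin d → ℝ)) (v : Fin d → ℝ) : Set (Fin d → ℝ) :=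
  {y | ∃ x ∈ τ, ∃ r : ℝ, 0 ≤ r ∧ y = x + r • v}

/-- The star subdivision `𝒮*(v)` of a fan `𝒮` at `v`: the cones of `𝒮` not
containing `v`, together with the cones `Cone(τ, v)` for `τ ∈ 𝒮` with `v ∉ τ` and
`{v} ∪ τ` contained in some cone of `𝒮`. -/
def starSubdiv {d : ℕ} (𝒮 : Set (Set (Fin d → ℝ))) (v : Fin d → ℝ) :
    Set (Set (Fin d → ℝ)) :=
  {σ | σ ∈ 𝒮 ∧ v ∉ σ} ∪
  {ρ | ∃ τ ∈ 𝒮, v ∉ τ ∧ (∃ σ ∈ 𝒮, insert v τ ⊆ σ) ∧ ρ = coneJoin τ v}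

/-- A smooth cone: generated by a subset of a ℤ-basis of the lattice `ℤ^d`. -/
def IsSmoothCone {d : ℕ} (σ : Set (Fin d → ℝ)) : Prop :=
  ∃ (b : Module.Basis (Fin d) ℤ (Fin d → ℤ)) (t : Finset (Fin d)),
    σ = {x | ∃ c : Fin d → ℝ, (∀ i, 0 ≤ c i) ∧ (∀ i ∉ t, c i = 0) ∧
      x = ∑ i, c i • zCast (b i)}

-- ===== basic lemmas =====
section Basics
variable {d s : ℕ}

lemma dotR_add_right (m x y : Fin d → ℝ) : dotR m (x + y) = dotR m x + dotR m y := by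
  simp [dotR, mul_add, Finset.sum_add_distrib]

lemma dotR_smul_right (m : Fin d → ℝ) (r : ℝ) (x : Fin d → ℝ) :
    dotR m (r • x) = r * dotR m x := by
  simp only [dotR, Finset.mul_sum, Pi.smul_apply, smul_eq_mul]; exact Finset.sum_congr rfl fun i _ => by ring

lemma dotR_add_left (m n x : Fin d → ℝ) : dotR (m + n) x = dotR m x + dotR n x := by
  simp [dotR, add_mul, Finset.sum_add_distrib]

lemma dotR_smul_left (r : ℝ) (m x : Fin d → ℝ) : dotR (r • m) x = r * dotR m x := by
  simp only [dotR, Finset.mul_sum, Pi.smul_apply, smul_eq_mul]; exact Finset.sum_congr rfl fun i _ => by ring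

lemma dotR_sub_left (m n x : Fin d → ℝ) : dotR (m - n) x = dotR m x - dotR n x := by
  simp [dotR, sub_mul, Finset.sum_sub_distrib]

lemma dotR_zero_right (m : Fin d → ℝ) : dotR m 0 = 0 := by simp [dotR]

lemma dotR_sum_right (m : Fin d → ℝ) (c : Fin s → ℝ) (w : Fin s → Fin d → ℝ) :
    dotR m (∑ i, c i • w i) = ∑ i, c i * dotR m (w i) := by
  induction s with
  | zero => simp [dotR]
  | succ n ih =>
      rw [Fin.sum_univ_castSucc, Fin.sum_univ_castSucc (f := fun i => c i * dotR m (w i)),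
        dotR_add_right, dotR_smul_right, ih]

lemma zero_mem_coneOf (w : Fin s → Fin d → ℝ) : (0 : Fin d → ℝ) ∈ coneOf w :=
  ⟨0, fun _ => le_refl 0, by simp⟩

lemma gen_mem_coneOf (w : Fin s → Fin d → ℝ) (j : Fin s) : w j ∈ coneOf w := by
  refine ⟨fun i => if i = j then 1 else 0, fun i => by positivity, ?_⟩
  simp [ite_smul, Finset.sum_ite_eq']

lemma add_mem_coneOf {w : Fin s → Fin d → ℝ} {x y : Fin d → ℝ}
    (hx : x ∈ coneOf w) (hy : y ∈ coneOf w) : x + y ∈ coneOf w := by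
  obtain ⟨c, hc, rfl⟩ := hx; obtain ⟨c', hc', rfl⟩ := hy
  exact ⟨c + c', fun i => add_nonneg (hc i) (hc' i), by
    simp [add_smul, Finset.sum_add_distrib]⟩

lemma smul_mem_coneOf {w : Fin s → Fin d → ℝ} {x : Fin d → ℝ} {r : ℝ}
    (hr : 0 ≤ r) (hx : x ∈ coneOf w) : r • x ∈ coneOf w := by
  obtain ⟨c, hc, rfl⟩ := hx
  exact ⟨r • c, fun i => mul_nonneg hr (hc i), by
    simp [Finset.smul_sum, smul_smul]⟩

/-- a rational polyhedral cone is closed under addition and nonneg scaling, and contains 0 -/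
lemma IsRatPolyCone.add_mem {σ : Set (Fin d → ℝ)} (h : IsRatPolyCone σ)
    {x y : Fin d → ℝ} (hx : x ∈ σ) (hy : y ∈ σ) : x + y ∈ σ := by
  obtain ⟨s, u, rfl⟩ := h; exact add_mem_coneOf hx hy

lemma IsRatPolyCone.smul_mem {σ : Set (Fin d → ℝ)} (h : IsRatPolyCone σ)
    {x : Fin d → ℝ} {r : ℝ} (hr : 0 ≤ r) (hx : x ∈ σ) : r • x ∈ σ := by
  obtain ⟨s, u, rfl⟩ := h; exact smul_mem_coneOf hr hx

lemma IsRatPolyCone.zero_mem {σ : Set (Fin d → ℝ)} (h : IsRatPolyCone σ) :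
    (0 : Fin d → ℝ) ∈ σ := by
  obtain ⟨s, u, rfl⟩ := h; exact zero_mem_coneOf _

lemma subset_coneJoin (τ : Set (Fin d → ℝ)) (v : Fin d → ℝ) : τ ⊆ coneJoin τ v :=
  fun x hx => ⟨x, hx, 0, le_refl 0, by simp⟩

lemma v_mem_coneJoin {τ : Set (Fin d → ℝ)} (h0 : (0:Fin d → ℝ) ∈ τ) (v : Fin d → ℝ) :
    v ∈ coneJoin τ v := ⟨0, h0, 1, zero_le_one, by simp⟩

lemma coneJoin_subset {τ σ : Set (Fin d → ℝ)} {v : Fin d → ℝ}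
    (hσ : IsRatPolyCone σ) (hτσ : τ ⊆ σ) (hv : v ∈ σ) : coneJoin τ v ⊆ σ := by
  rintro y ⟨x, hx, r, hr, rfl⟩
  exact hσ.add_mem (hτσ hx) (hσ.smul_mem hr hv)

end Basics

-- ===== closedness of finitely generated cones =====
section Closed
variable {d s : ℕ}

lemma exists_smaller_support (w : Fin s → Fin d → ℝ) (S : Finset (Fin s))
    (c g : Fin s → ℝ) (hc : ∀ i, 0 ≤ c i) (hcs : ∀ i ∉ S, c i = 0)
    (hgs : ∀ i ∉ S, g i = 0) (hrel : ∑ i, g i • w i = 0) (hj : ∃ j, 0 < g j) :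
    ∃ i₀ ∈ S, ∃ c' : Fin s → ℝ, (∀ i, 0 ≤ c' i) ∧ (∀ i ∉ S.erase i₀, c' i = 0) ∧
      ∑ i, c' i • w i = ∑ i, c i • w i := by
  classical
  obtain ⟨j, hjpos⟩ := hj
  have hjS : j ∈ S := by
    by_contra h; rw [hgs j h] at hjpos; exact lt_irrefl 0 hjpos
  set P := S.filter (fun i => 0 < g i) with hP
  have hPne : P.Nonempty := ⟨j, Finset.mem_filter.mpr ⟨hjS, hjpos⟩⟩
  obtain ⟨i₀, hi₀P, hmin⟩ := Finset.exists_min_image P (fun i => c i / g i) hPne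
  have hgi₀ : 0 < g i₀ := (Finset.mem_filter.mp hi₀P).2
  set t := c i₀ / g i₀ with ht
  have ht0 : 0 ≤ t := div_nonneg (hc i₀) hgi₀.le
  refine ⟨i₀, (Finset.mem_filter.mp hi₀P).1, fun i => c i - t * g i, ?_, ?_, ?_⟩
  · intro i
    by_cases hgi : 0 < g i
    · have hiS : i ∈ S := by
        by_contra h; rw [hgs i h] at hgi; exact lt_irrefl 0 hgi
      have hiP : i ∈ P := Finset.mem_filter.mpr ⟨hiS, hgi⟩
      have := (le_div_iff₀ hgi).mp (hmin i hiP)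
      show 0 ≤ c i - t * g i
      linarith
    · push_neg at hgi
      have : t * g i ≤ 0 := mul_nonpos_of_nonneg_of_nonpos ht0 hgi
      show 0 ≤ c i - t * g i
      linarith [hc i]
  · intro i hi
    by_cases hiS : i ∈ S
    · have hii : i = i₀ := by
        by_contra hne; exact hi (Finset.mem_erase.mpr ⟨hne, hiS⟩)
      subst hii
      have : t * g i = c i := by
        rw [ht]; field_simp
      simp [this]
    · show c i - t * g i = 0
      rw [hcs i hiS, hgs i hiS]; ring
  · have h5 : ∀ i, (c i - t * g i) • w i = c i • w i - t • (g i • w i) := by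
      intro i; rw [sub_smul, smul_smul]
    simp only [h5, Finset.sum_sub_distrib, ← Finset.smul_sum, hrel, smul_zero, sub_zero]

lemma coneOf_caratheodory (w : Fin s → Fin d → ℝ) (S : Finset (Fin s)) :
    ∀ c : Fin s → ℝ, (∀ i, 0 ≤ c i) → (∀ i ∉ S, c i = 0) →
    ∃ T ⊆ S, LinearIndependent ℝ (fun i : {x // x ∈ T} => w (i : Fin s)) ∧
      ∃ c' : Fin s → ℝ, (∀ i, 0 ≤ c' i) ∧ (∀ i ∉ T, c' i = 0) ∧
        ∑ i, c' i • w i = ∑ i, c i • w i := by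
  classical
  induction S using Finset.strongInductionOn with
  | _ S ih =>
    intro c hc hsupp
    by_cases hli : LinearIndependent ℝ (fun i : {x // x ∈ S} => w (i : Fin s))
    · exact ⟨S, le_refl _, hli, c, hc, hsupp, rfl⟩
    · obtain ⟨g0, hg0, i1, hi1⟩ := Fintype.not_linearIndependent_iff.mp hli
      set g : Fin s → ℝ := fun i => if h : i ∈ S then g0 ⟨i, h⟩ else 0 with hgdef
      have hgs : ∀ i ∉ S, g i = 0 := fun i hi => dif_neg hi
      have hattach : ∑ i ∈ S.attach, g (i : Fin s) • w (i : Fin s) = 0 := by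
        have : ∀ i : {x // x ∈ S}, g (i : Fin s) = g0 i := fun i => dif_pos i.2
        calc ∑ i ∈ S.attach, g (i : Fin s) • w (i : Fin s)
            = ∑ i ∈ S.attach, g0 i • w (i : Fin s) :=
              Finset.sum_congr rfl fun i _ => by rw [this]
          _ = 0 := by rw [← Finset.univ_eq_attach]; exact hg0
      have hrel : ∑ i, g i • w i = 0 := by
        rw [← Finset.sum_subset (Finset.subset_univ S)
          (fun i _ hi => by rw [hgs i hi, zero_smul])]
        rw [← Finset.sum_attach S (fun i => g i • w i)]
        exact hattach
      have hg1 : g (i1 : Fin s) = g0 i1 := dif_pos i1.2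
      have hgne : g (i1 : Fin s) ≠ 0 := by rw [hg1]; exact hi1
      -- choose the right sign
      rcases lt_or_gt_of_ne hgne with hneg | hpos
      · -- use -g
        have hrel' : ∑ i, (-g) i • w i = 0 := by
          simp only [Pi.neg_apply, neg_smul, Finset.sum_neg_distrib, hrel, neg_zero]
        obtain ⟨i₀, hi₀S, c', hc', hc's, hsum⟩ :=
          exists_smaller_support w S c (-g) hc hsupp
            (fun i hi => by simp [hgs i hi]) hrel' ⟨i1, by simpa using hneg⟩
        obtain ⟨T, hTsub, hTli, c'', hc'', hc''s, hsum'⟩ :=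
          ih (S.erase i₀) (Finset.erase_ssubset hi₀S) c' hc' hc's
        exact ⟨T, hTsub.trans (Finset.erase_subset _ _), hTli, c'', hc'', hc''s,
          by rw [hsum', hsum]⟩
      · obtain ⟨i₀, hi₀S, c', hc', hc's, hsum⟩ :=
          exists_smaller_support w S c g hc hsupp hgs hrel ⟨i1, hpos⟩
        obtain ⟨T, hTsub, hTli, c'', hc'', hc''s, hsum'⟩ :=
          ih (S.erase i₀) (Finset.erase_ssubset hi₀S) c' hc' hc's
        exact ⟨T, hTsub.trans (Finset.erase_subset _ _), hTli, c'', hc'', hc''s,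
          by rw [hsum', hsum]⟩

end Closed

section Closed2
variable {d s : ℕ}

lemma sum_extend (T : Finset (Fin s)) (c : Fin s → ℝ) (f : Fin s → Fin d → ℝ)
    (hcs : ∀ i ∉ T, c i = 0) :
    ∑ i : {x // x ∈ T}, c (i : Fin s) • f (i : Fin s) = ∑ i, c i • f i := by
  rw [← Finset.sum_subset (Finset.subset_univ T)
      (fun i _ hi => by rw [hcs i hi, zero_smul]),
    ← Finset.sum_attach T (fun i => c i • f i), ← Finset.univ_eq_attach]

lemma isClosed_coneOf (w : Fin s → Fin d → ℝ) : IsClosed (coneOf w) := by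
  classical
  have key : ∀ T : Finset (Fin s),
      LinearIndependent ℝ (fun i : {x // x ∈ T} => w (i : Fin s)) →
      IsClosed {x : Fin d → ℝ | ∃ c : Fin s → ℝ, (∀ i, 0 ≤ c i) ∧
        (∀ i ∉ T, c i = 0) ∧ x = ∑ i, c i • w i} := by
    intro T hT
    set L : ({x // x ∈ T} → ℝ) →ₗ[ℝ] (Fin d → ℝ) :=
      { toFun := fun c => ∑ i, c i • w (i : Fin s)
        map_add' := by
          intro a b
          simp [add_smul, Finset.sum_add_distrib]
        map_smul' := by
          intro r a
          simp [smul_smul, Finset.smul_sum] } with hL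
    have hinj : LinearMap.ker L = ⊥ := by
      rw [LinearMap.ker_eq_bot']
      intro c hc
      have := Fintype.linearIndependent_iff.mp hT c hc
      funext i; exact this i
    have hemb := LinearMap.isClosedEmbedding_of_injective hinj
    have hA : IsClosed {c : {x // x ∈ T} → ℝ | ∀ i, 0 ≤ c i} := by
      have : {c : {x // x ∈ T} → ℝ | ∀ i, 0 ≤ c i} =
          ⋂ i, {c : {x // x ∈ T} → ℝ | 0 ≤ c i} := by
        ext c; simp
      rw [this]
      exact isClosed_iInter fun i =>
        isClosed_le continuous_const (continuous_apply i)
    have himg := hemb.isClosedMap _ hA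
    have heq : L '' {c : {x // x ∈ T} → ℝ | ∀ i, 0 ≤ c i} =
        {x : Fin d → ℝ | ∃ c : Fin s → ℝ, (∀ i, 0 ≤ c i) ∧
          (∀ i ∉ T, c i = 0) ∧ x = ∑ i, c i • w i} := by
      ext x
      constructor
      · rintro ⟨c0, hc0, rfl⟩
        refine ⟨fun i => if h : i ∈ T then c0 ⟨i, h⟩ else 0,
          fun i => ?_, fun i hi => dif_neg hi, ?_⟩
        · show (0:ℝ) ≤ if h : i ∈ T then c0 ⟨i, h⟩ else 0
          by_cases h : i ∈ T
          · rw [dif_pos h]; exact hc0 _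
          · rw [dif_neg h]
        · show ∑ i : {x // x ∈ T}, c0 i • w (i : Fin s) = _
          rw [← sum_extend T _ w (fun i hi => dif_neg hi)]
          exact Finset.sum_congr rfl fun i _ => by rw [dif_pos i.2]
      · rintro ⟨c, hc, hcs, rfl⟩
        refine ⟨fun i => c (i : Fin s), fun i => hc _, ?_⟩
        show ∑ i : {x // x ∈ T}, c (i : Fin s) • w (i : Fin s) = _
        exact sum_extend T c w hcs
    rw [← heq]; exact himg
  have cover : coneOf w = ⋃ T : {T : Finset (Fin s) //
      LinearIndependent ℝ (fun i : {x // x ∈ T.1} => w (i : Fin s))},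
      {x : Fin d → ℝ | ∃ c : Fin s → ℝ, (∀ i, 0 ≤ c i) ∧
        (∀ i ∉ T.1, c i = 0) ∧ x = ∑ i, c i • w i} := by
    ext x
    constructor
    · rintro ⟨c, hc, rfl⟩
      obtain ⟨T, _, hTli, c', hc', hc's, hsum⟩ :=
        coneOf_caratheodory w Finset.univ c hc (fun i hi => absurd (Finset.mem_univ i) hi)
      exact Set.mem_iUnion.mpr ⟨⟨T, hTli⟩, c', hc', hc's, hsum.symm⟩
    · intro hx
      obtain ⟨T, c, hc, _, rfl⟩ := Set.mem_iUnion.mp hx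
      exact ⟨c, hc, rfl⟩
  rw [cover]
  exact isClosed_iUnion_of_finite fun T => key T.1 T.2

lemma IsRatPolyCone.isClosed {σ : Set (Fin d → ℝ)} (h : IsRatPolyCone σ) :
    IsClosed σ := by
  obtain ⟨s, u, rfl⟩ := h; exact isClosed_coneOf _

end Closed2

-- ===== separation and the key lemma =====
section Sep
variable {d s : ℕ}

lemma dotR_neg_right (m x : Fin d → ℝ) : dotR m (-x) = -dotR m x := by
  simp [dotR, mul_neg, Finset.sum_neg_distrib]

lemma dotR_sub_right (m x y : Fin d → ℝ) : dotR m (x - y) = dotR m x - dotR m y := by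
  rw [sub_eq_add_neg, dotR_add_right, dotR_neg_right, sub_eq_add_neg]

lemma coneOf_convex (w : Fin s → Fin d → ℝ) : Convex ℝ (coneOf w) :=
  fun x hx y hy a b ha hb _ =>
    add_mem_coneOf (smul_mem_coneOf ha hx) (smul_mem_coneOf hb hy)

lemma coneOf_separation (w : Fin s → Fin d → ℝ) {u : Fin d → ℝ}
    (hu : u ∉ coneOf w) :
    ∃ m : Fin d → ℝ, (∀ z ∈ coneOf w, 0 ≤ dotR m z) ∧ dotR m u < 0 := by
  obtain ⟨f, u₀, hfu, hsep⟩ :=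
    geometric_hahn_banach_point_closed (coneOf_convex w) (isClosed_coneOf w) hu
  have hfz : ∀ z ∈ coneOf w, 0 ≤ f z := by
    intro z hz
    by_contra h
    push_neg at h
    set t : ℝ := (|u₀| + 1) / (-f z) with htdef
    have hfz0 : f z ≠ 0 := ne_of_lt h
    have ht : 0 ≤ t := div_nonneg (by positivity) (by linarith)
    have htz : t • z ∈ coneOf w := smul_mem_coneOf ht hz
    have := hsep _ htz
    rw [f.map_smul] at this
    have heval : t • f z = -(|u₀| + 1) := by
      simp only [smul_eq_mul, htdef]
      rw [div_mul_eq_mul_div, mul_comm, ← div_mul_eq_mul_div, div_neg, div_self hfz0]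
      ring
    rw [heval] at this
    have := neg_abs_le u₀
    linarith
  have hu0 : u₀ < 0 := by
    have := hsep 0 (zero_mem_coneOf w)
    rw [map_zero] at this
    linarith
  set m : Fin d → ℝ := fun i => f (Pi.single i (1:ℝ)) with hm
  have hdot : ∀ z, dotR m z = f z := by
    intro z
    conv_rhs => rw [← Finset.univ_sum_single z]
    rw [map_sum]
    refine Finset.sum_congr rfl fun i _ => ?_
    have : (Pi.single i (z i) : Fin d → ℝ) = z i • (Pi.single i (1:ℝ) : Fin d → ℝ) := by
      rw [← Pi.single_smul, smul_eq_mul, mul_one]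
    rw [this, f.map_smul, smul_eq_mul, hm]
    ring
  exact ⟨m, fun z hz => by rw [hdot]; exact hfz z hz,
    by rw [hdot]; linarith⟩

lemma coneJoin_coneOf (w : Fin s → Fin d → ℝ) (v : Fin d → ℝ) :
    coneJoin (coneOf w) v = coneOf (Fin.snoc w v) := by
  ext y
  constructor
  · rintro ⟨x, ⟨c, hc, rfl⟩, r, hr, rfl⟩
    refine ⟨Fin.snoc c r, fun i => ?_, ?_⟩
    · refine Fin.lastCases ?_ ?_ i
      · rw [Fin.snoc_last]; exact hr
      · intro j; rw [Fin.snoc_castSucc]; exact hc j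
    · rw [Fin.sum_univ_castSucc]
      simp [Fin.snoc_castSucc, Fin.snoc_last]
  · rintro ⟨c, hc, rfl⟩
    refine ⟨∑ i : Fin s, c i.castSucc • w i, ⟨fun i => c i.castSucc,
      fun i => hc _, rfl⟩, c (Fin.last s), hc _, ?_⟩
    rw [Fin.sum_univ_castSucc]
    simp [Fin.snoc_castSucc, Fin.snoc_last]

lemma key_face {σ : Set (Fin d → ℝ)} (hσ : IsRatPolyCone σ)
    (hsc : σ ∩ (-σ) = {0}) {v x : Fin d → ℝ} (hv : v ∈ σ) (hv0 : v ≠ 0)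
    (hx : x ∈ σ) :
    ∃ m : Fin d → ℝ, (∀ z ∈ σ, 0 ≤ dotR m z) ∧ 0 < dotR m v ∧
      ∃ r : ℝ, 0 ≤ r ∧ x - r • v ∈ σ ∧ dotR m (x - r • v) = 0 := by
  have hvnσ : -v ∉ σ := by
    intro h
    have : v ∈ σ ∩ (-σ) := ⟨hv, Set.mem_neg.mpr h⟩
    rw [hsc] at this
    exact hv0 this
  set R : Set ℝ := {r : ℝ | 0 ≤ r ∧ x - r • v ∈ σ} with hRdef
  have hR0 : (0:ℝ) ∈ R := ⟨le_refl 0, by simpa using hx⟩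
  have hRc : IsClosed R := by
    have : R = Set.Ici (0:ℝ) ∩ (fun r : ℝ => x - r • v) ⁻¹' σ := by
      ext r; simp [hRdef, Set.mem_Ici]
    rw [this]
    exact IsClosed.inter isClosed_Ici
      (hσ.isClosed.preimage (continuous_const.sub (continuous_id.smul continuous_const)))
  have hRbdd : BddAbove R := by
    by_contra h
    rw [not_bddAbove_iff] at h
    have hseq : ∀ n : ℕ, ∃ r, r ∈ R ∧ (n:ℝ) < r := fun n => by
      obtain ⟨y, hy, hlt⟩ := h n; exact ⟨y, hy, hlt⟩
    choose r hrR hrlt using hseq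
    have hrpos : ∀ n, 0 < r n := fun n =>
      lt_of_le_of_lt (Nat.cast_nonneg n) (hrlt n)
    have hmem : ∀ n, (r n)⁻¹ • x - v ∈ σ := by
      intro n
      have h1 : (r n)⁻¹ • (x - r n • v) ∈ σ :=
        hσ.smul_mem (inv_nonneg.mpr (hrpos n).le) (hrR n).2
      have h2 : (r n)⁻¹ • (x - r n • v) = (r n)⁻¹ • x - v := by
        rw [smul_sub, smul_smul, inv_mul_cancel₀ (hrpos n).ne', one_smul]
      rwa [h2] at h1
    have htendinv : Filter.Tendsto (fun n => (r n)⁻¹) Filter.atTop (nhds 0) := by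
      apply Filter.Tendsto.comp tendsto_inv_atTop_zero
      exact Filter.tendsto_atTop_mono (fun n => (hrlt n).le) tendsto_natCast_atTop_atTop
    have htend : Filter.Tendsto (fun n => (r n)⁻¹ • x - v) Filter.atTop (nhds (-v)) := by
      have h1 : Filter.Tendsto (fun n => (r n)⁻¹ • x) Filter.atTop (nhds ((0:ℝ) • x)) :=
        Filter.Tendsto.smul htendinv tendsto_const_nhds
      rw [zero_smul] at h1
      have h2 := Filter.Tendsto.sub h1 (tendsto_const_nhds (x := v))
      rwa [zero_sub] at h2
    exact hvnσ (hσ.isClosed.mem_of_tendsto htend (Filter.Eventually.of_forall hmem))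
  set rs := sSup R with hrs
  have hrsR : rs ∈ R := IsClosed.csSup_mem hRc ⟨0, hR0⟩ hRbdd
  set y := x - rs • v with hy
  have hyσ : y ∈ σ := hrsR.2
  obtain ⟨s, uz, hgen⟩ := id hσ
  set w : Fin s → Fin d → ℝ := fun i => zCast (uz i) with hw
  set D := coneOf (Fin.snoc w (-y)) with hD
  have hDJ : D = coneJoin σ (-y) := by rw [hgen, coneJoin_coneOf]
  have hyD : -y ∈ D := by
    have := gen_mem_coneOf (Fin.snoc w (-y)) (Fin.last s)
    rwa [Fin.snoc_last] at this
  have hσD : σ ⊆ D := by rw [hDJ]; exact subset_coneJoin σ (-y)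
  have hvnotD : -v ∉ D := by
    intro hmem
    rw [hDJ] at hmem
    obtain ⟨b, hb, t, ht, heq⟩ := hmem
    rcases eq_or_lt_of_le ht with rfl | htpos
    · rw [zero_smul, add_zero] at heq
      exact hvnσ (heq ▸ hb)
    · have hv' : v = t • y - b := by
        have h2 := congrArg (fun z => -z) heq
        simp only [neg_neg] at h2
        rw [h2]
        show -(b + t • (-y)) = t • y - b
        rw [neg_add, smul_neg, neg_neg, neg_add_eq_sub]
      have hty : t • y = b + v := by rw [hv']; abel
      have h1 : y - t⁻¹ • v = t⁻¹ • b := by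
        calc y - t⁻¹ • v = t⁻¹ • (t • y) - t⁻¹ • v := by
              rw [smul_smul, inv_mul_cancel₀ htpos.ne', one_smul]
          _ = t⁻¹ • (b + v) - t⁻¹ • v := by rw [hty]
          _ = t⁻¹ • b := by rw [smul_add]; ring_nf
      have h3 : x - (rs + t⁻¹) • v ∈ σ := by
        have he : x - (rs + t⁻¹) • v = y - t⁻¹ • v := by
          rw [hy, add_smul]; ring_nf
        rw [he, h1]
        exact hσ.smul_mem (inv_nonneg.mpr htpos.le) hb
      have h4 : rs + t⁻¹ ∈ R := ⟨by
        have h6 : 0 < t⁻¹ := inv_pos.mpr htpos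
        linarith [hrsR.1], h3⟩
      have h5 : rs + t⁻¹ ≤ rs := le_csSup hRbdd h4
      have : (0:ℝ) < t⁻¹ := inv_pos.mpr htpos
      linarith
  obtain ⟨m, hmD, hmv⟩ := coneOf_separation (Fin.snoc w (-y)) hvnotD
  have hmσ : ∀ z ∈ σ, 0 ≤ dotR m z := fun z hz => hmD z (hσD hz)
  have hmvpos : 0 < dotR m v := by
    rw [dotR_neg_right] at hmv; linarith
  have hmy : dotR m y = 0 :=
    le_antisymm (by have := hmD _ hyD; rw [dotR_neg_right] at this; linarith)
      (hmσ y hyσ)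
  exact ⟨m, hmσ, hmvpos, rs, hrsR.1, hyσ, hmy⟩

end Sep

-- ===== fan-level helpers =====
section FanHelp
variable {d : ℕ}

lemma fan_face_functional {𝒮 : Set (Set (Fin d → ℝ))} (h𝒮 : IsFan 𝒮)
    {τ σ' : Set (Fin d → ℝ)} {v : Fin d → ℝ}
    (hτ : τ ∈ 𝒮) (hσ' : σ' ∈ 𝒮) (hsub : τ ⊆ σ') (hv' : v ∈ σ') (hvτ : v ∉ τ) :
    ∃ m : Fin d → ℝ, (∀ z ∈ σ', 0 ≤ dotR m z) ∧ τ = {x ∈ σ' | dotR m x = 0} ∧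
      0 < dotR m v ∧ ∀ x ∈ τ, dotR m x = 0 := by
  obtain ⟨-, hface⟩ := h𝒮.2.2.2 τ hτ σ' hσ'
  obtain ⟨m, hm1, hm2⟩ := hface
  rw [Set.inter_eq_left.mpr hsub] at hm2
  refine ⟨m, hm1, hm2, ?_, ?_⟩
  · rcases lt_or_eq_of_le (hm1 v hv') with h | h
    · exact h
    · exact absurd (hm2 ▸ (⟨hv', h.symm⟩ : v ∈ {x ∈ σ' | dotR m x = 0})) hvτ
  · intro x hx
    rw [hm2] at hx
    exact hx.2

lemma faceOf_trans {σ F G : Set (Fin d → ℝ)} (hσ : IsRatPolyCone σ)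
    (hF : IsFaceOf F σ) (hG : IsFaceOf G F) : IsFaceOf G σ := by
  obtain ⟨s, uz, rfl⟩ := hσ
  set w : Fin s → Fin d → ℝ := fun i => zCast (uz i) with hw
  obtain ⟨m, hm1, hm2⟩ := hF
  obtain ⟨n, hn1, hn2⟩ := hG
  have hmw : ∀ j, 0 ≤ dotR m (w j) := fun j => hm1 _ (gen_mem_coneOf w j)
  set lam : ℝ := 1 + ∑ j, max 0 (-(dotR n (w j)) / dotR m (w j)) with hlam
  have hlam_ge : ∀ j, 0 < dotR m (w j) → -(dotR n (w j)) / dotR m (w j) < lam := by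
    intro j hj
    have h1 : max 0 (-(dotR n (w j)) / dotR m (w j)) ≤
        ∑ k, max 0 (-(dotR n (w k)) / dotR m (w k)) :=
      Finset.single_le_sum (f := fun k => max 0 (-(dotR n (w k)) / dotR m (w k)))
        (fun k _ => le_max_left _ _) (Finset.mem_univ j)
    have h2 : -(dotR n (w j)) / dotR m (w j) ≤ max 0 (-(dotR n (w j)) / dotR m (w j)) :=
      le_max_right _ _
    rw [hlam]; linarith
  set p : Fin d → ℝ := n + lam • m with hp
  have hpd : ∀ z, dotR p z = dotR n z + lam * dotR m z := by
    intro z; rw [hp, dotR_add_left, dotR_smul_left]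
  have hpw : ∀ j, 0 ≤ dotR p (w j) := by
    intro j
    rcases lt_or_eq_of_le (hmw j) with hj | hj
    · have := hlam_ge j hj
      rw [div_lt_iff₀ hj] at this
      rw [hpd]; linarith
  -- m (w j) = 0 case
    · have hwF : w j ∈ F := by
        rw [hm2]; exact ⟨gen_mem_coneOf w j, hj.symm⟩
      have := hn1 _ hwF
      rw [hpd, ← hj]; linarith
  have hpw' : ∀ j, dotR p (w j) = 0 → dotR m (w j) = 0 := by
    intro j hj
    rcases lt_or_eq_of_le (hmw j) with h | h
    · exfalso
      have := hlam_ge j h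
      rw [div_lt_iff₀ h] at this
      rw [hpd] at hj; linarith
    · exact h.symm
  refine ⟨p, ?_, ?_⟩
  · rintro x ⟨c, hc, rfl⟩
    rw [dotR_sum_right]
    exact Finset.sum_nonneg fun j _ => mul_nonneg (hc j) (hpw j)
  · ext x
    constructor
    · intro hxG
      have hxF : x ∈ F := by rw [hn2] at hxG; exact hxG.1
      have hxσ : x ∈ coneOf w := by rw [hm2] at hxF; exact hxF.1
      have hxm : dotR m x = 0 := by rw [hm2] at hxF; exact hxF.2
      have hxn : dotR n x = 0 := by rw [hn2] at hxG; exact hxG.2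
      exact ⟨hxσ, by rw [hpd, hxm, hxn]; ring⟩
    · rintro ⟨hxσ, hxp⟩
      obtain ⟨c, hc, rfl⟩ := hxσ
      rw [dotR_sum_right] at hxp
      have hterm : ∀ j ∈ Finset.univ, 0 ≤ c j * dotR p (w j) :=
        fun j _ => mul_nonneg (hc j) (hpw j)
      have hzero := (Finset.sum_eq_zero_iff_of_nonneg hterm).mp hxp
      have hmj : ∀ j, c j * dotR m (w j) = 0 := by
        intro j
        rcases eq_or_ne (c j) 0 with h | h
        · rw [h, zero_mul]
        · have h1 := hzero j (Finset.mem_univ j)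
          have h2 : dotR p (w j) = 0 := by
            rcases mul_eq_zero.mp h1 with h' | h'
            · exact absurd h' h
            · exact h'
          rw [hpw' j h2, mul_zero]
      have hxm : dotR m (∑ i, c i • w i) = 0 := by
        rw [dotR_sum_right]
        exact Finset.sum_eq_zero fun j _ => hmj j
      have hxF : (∑ i, c i • w i) ∈ F := by
        rw [hm2]; exact ⟨⟨c, hc, rfl⟩, hxm⟩
      have hxn : dotR n (∑ i, c i • w i) = 0 := by
        have h3 : dotR p (∑ i, c i • w i) = 0 := by
          rw [dotR_sum_right]; exact hxp
        rw [hpd, hxm] at h3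
        linarith
      rw [hn2]
      exact ⟨hxF, hxn⟩

end FanHelp

-- ===== star subdivision: cones and face closure =====
section Star1
variable {d : ℕ}

lemma zCast_snoc {s : ℕ} (u : Fin s → Fin d → ℤ) (vz : Fin d → ℤ) :
    (fun i : Fin (s+1) => zCast ((Fin.snoc u vz : Fin (s+1) → Fin d → ℤ) i)) =
      Fin.snoc (fun i => zCast (u i)) (zCast vz) := by
  funext i
  refine Fin.lastCases ?_ ?_ i
  · simp [Fin.snoc_last]
  · intro j; simp [Fin.snoc_castSucc]

lemma IsRatPolyCone.coneJoin_zCast {τ : Set (Fin d → ℝ)} (h : IsRatPolyCone τ)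
    (vz : Fin d → ℤ) : IsRatPolyCone (coneJoin τ (zCast vz)) := by
  obtain ⟨s, u, rfl⟩ := h
  exact ⟨s+1, Fin.snoc u vz, by rw [coneJoin_coneOf, zCast_snoc]⟩

lemma starSubdiv_faceClosed {𝒮 : Set (Set (Fin d → ℝ))} (h𝒮 : IsFan 𝒮)
    (v : Fin d → ℝ) :
    ∀ ρ ∈ starSubdiv 𝒮 v, ∀ F, IsFaceOf F ρ → F ∈ starSubdiv 𝒮 v := by
  intro ρ hρ F hF
  rcases hρ with ⟨hρS, hvρ⟩ | ⟨τ, hτ, hvτ, ⟨σ', hσ', hins⟩, rfl⟩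
  · left
    refine ⟨h𝒮.2.2.1 ρ hρS F hF, fun hvF => hvρ ?_⟩
    obtain ⟨m, hm1, hm2⟩ := hF
    rw [hm2] at hvF
    exact hvF.1
  · obtain ⟨n, hn1, hn2⟩ := hF
    have hτrat := (h𝒮.2.1 τ hτ).1
    have h0τ : (0:Fin d → ℝ) ∈ τ := hτrat.zero_mem
    have hvρ' : v ∈ coneJoin τ v := v_mem_coneJoin h0τ v
    have hτρ : τ ⊆ coneJoin τ v := subset_coneJoin τ v
    have hnv : 0 ≤ dotR n v := hn1 v hvρ'
    rcases lt_or_eq_of_le hnv with hpos | hzero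
    · have hFeq : F = {x ∈ τ | dotR n x = 0} := by
        rw [hn2]; ext y
        constructor
        · rintro ⟨⟨x, hx, r, hr, rfl⟩, hy0⟩
          have hnx : 0 ≤ dotR n x := hn1 x (hτρ hx)
          rw [dotR_add_right, dotR_smul_right] at hy0
          have hrnv : 0 ≤ r * dotR n v := mul_nonneg hr hnv
          have hr0 : r = 0 := by
            have h1 : r * dotR n v = 0 := by linarith
            rcases mul_eq_zero.mp h1 with h | h
            exacts [h, absurd h (ne_of_gt hpos)]
          subst hr0
          simp only [zero_smul, add_zero]
          rw [zero_mul] at hy0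
          exact ⟨hx, by linarith⟩
        · rintro ⟨hyτ, hy0⟩
          exact ⟨hτρ hyτ, hy0⟩
      left
      refine ⟨h𝒮.2.2.1 τ hτ F ⟨n, fun x hx => hn1 x (hτρ hx), hFeq⟩, fun hvF => ?_⟩
      rw [hFeq] at hvF
      exact (ne_of_gt hpos) hvF.2
    · set F' := {x ∈ τ | dotR n x = 0} with hF'
      have hFeq : F = coneJoin F' v := by
        rw [hn2]; ext y
        constructor
        · rintro ⟨⟨x, hx, r, hr, rfl⟩, hy0⟩
          rw [dotR_add_right, dotR_smul_right, ← hzero, mul_zero, add_zero] at hy0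
          exact ⟨x, ⟨hx, hy0⟩, r, hr, rfl⟩
        · rintro ⟨x, ⟨hx, hx0⟩, r, hr, rfl⟩
          refine ⟨⟨x, hx, r, hr, rfl⟩, ?_⟩
          rw [dotR_add_right, dotR_smul_right, ← hzero, mul_zero, add_zero, hx0]
      right
      refine ⟨F', h𝒮.2.2.1 τ hτ F' ⟨n, fun x hx => hn1 x (hτρ hx), rfl⟩,
        fun h => hvτ h.1, ⟨σ', hσ', ?_⟩, hFeq⟩
      rw [Set.insert_subset_iff]
      exact ⟨hins (Set.mem_insert v τ), fun x hx =>
        hins (Set.subset_insert v τ hx.1)⟩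

end Star1

-- ===== star subdivision: intersections =====
section Star2
variable {d : ℕ}

lemma starSubdiv_inter_mixed {𝒮 : Set (Set (Fin d → ℝ))} (h𝒮 : IsFan 𝒮)
    {v : Fin d → ℝ} {σ τ σ' : Set (Fin d → ℝ)}
    (hσS : σ ∈ 𝒮) (hvσ : v ∉ σ) (hτ : τ ∈ 𝒮) (hvτ : v ∉ τ)
    (hσ' : σ' ∈ 𝒮) (hins : insert v τ ⊆ σ') :
    IsFaceOf (σ ∩ coneJoin τ v) σ ∧ IsFaceOf (σ ∩ coneJoin τ v) (coneJoin τ v) := by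
  have hτσ' : τ ⊆ σ' := (Set.insert_subset_iff.mp hins).2
  have hvσ' : v ∈ σ' := hins (Set.mem_insert v τ)
  obtain ⟨m, hm1, hm2, hmv, hmτ⟩ := fan_face_functional h𝒮 hτ hσ' hτσ' hvσ' hvτ
  have hρsub : coneJoin τ v ⊆ σ' :=
    coneJoin_subset (h𝒮.2.1 σ' hσ').1 hτσ' hvσ'
  obtain ⟨g, hg1, hg2⟩ := (h𝒮.2.2.2 σ hσS σ' hσ').2
  have hgv : 0 < dotR g v := by
    rcases lt_or_eq_of_le (hg1 v hvσ') with h | h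
    · exact h
    · exfalso
      have : v ∈ σ ∩ σ' := by rw [hg2]; exact ⟨hvσ', h.symm⟩
      exact hvσ this.1
  have hkey : σ ∩ coneJoin τ v = σ ∩ τ := by
    ext y
    constructor
    · rintro ⟨hyσ, x, hx, r, hr, rfl⟩
      have hyσ' : x + r • v ∈ σ' := hρsub ⟨x, hx, r, hr, rfl⟩
      have hyG : (x + r • v) ∈ σ ∩ σ' := ⟨hyσ, hyσ'⟩
      have hgy : dotR g (x + r • v) = 0 := by rw [hg2] at hyG; exact hyG.2
      rw [dotR_add_right, dotR_smul_right] at hgy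
      have hgx : 0 ≤ dotR g x := hg1 x (hτσ' hx)
      have hrgv : 0 ≤ r * dotR g v := mul_nonneg hr hgv.le
      have hr0 : r = 0 := by
        have h1 : r * dotR g v = 0 := by linarith
        rcases mul_eq_zero.mp h1 with h | h
        exacts [h, absurd h (ne_of_gt hgv)]
      subst hr0
      rw [zero_smul, add_zero] at hyσ ⊢
      exact ⟨hyσ, hx⟩
    · rintro ⟨hyσ, hyτ⟩
      exact ⟨hyσ, subset_coneJoin τ v hyτ⟩
  constructor
  · rw [hkey]
    exact (h𝒮.2.2.2 σ hσS τ hτ).1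
  · obtain ⟨h, hh1, hh2⟩ := (h𝒮.2.2.2 σ hσS τ hτ).2
    set q : Fin d → ℝ := h - (dotR h v / dotR m v) • m + m with hqdef
    have hq : ∀ z, dotR q z =
        dotR h z - (dotR h v / dotR m v) * dotR m z + dotR m z := by
      intro z; rw [hqdef, dotR_add_left, dotR_sub_left, dotR_smul_left]
    have hqτ : ∀ x ∈ τ, dotR q x = dotR h x := fun x hx => by
      rw [hq, hmτ x hx]; ring
    have hqv : dotR q v = dotR m v := by
      rw [hq]; field_simp; ring
    have hqrep : ∀ x ∈ τ, ∀ r : ℝ, dotR q (x + r • v) = dotR h x + r * dotR m v := by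
      intro x hx r
      rw [dotR_add_right, dotR_smul_right, hqτ x hx, hqv]
    refine ⟨q, ?_, ?_⟩
    · rintro y ⟨x, hx, r, hr, rfl⟩
      rw [hqrep x hx r]
      have h1 := hh1 x hx
      have h2 := mul_nonneg hr hmv.le
      linarith
    · rw [hkey]
      ext y
      constructor
      · rintro ⟨hyσ, hyτ⟩
        refine ⟨subset_coneJoin τ v hyτ, ?_⟩
        have hmem : y ∈ σ ∩ τ := ⟨hyσ, hyτ⟩
        rw [hh2] at hmem
        rw [hqτ y hyτ]
        exact hmem.2
      · rintro ⟨⟨x, hx, r, hr, rfl⟩, hy0⟩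
        rw [hqrep x hx r] at hy0
        have h1 := hh1 x hx
        have h2 : 0 ≤ r * dotR m v := mul_nonneg hr hmv.le
        have hhx : dotR h x = 0 := by linarith
        have hr0 : r = 0 := by
          have h3 : r * dotR m v = 0 := by linarith
          rcases mul_eq_zero.mp h3 with h' | h'
          exacts [h', absurd h' (ne_of_gt hmv)]
        subst hr0
        rw [zero_smul, add_zero]
        have : x ∈ σ ∩ τ := by rw [hh2]; exact ⟨hx, hhx⟩
        exact this

lemma starSubdiv_inter_join {𝒮 : Set (Set (Fin d → ℝ))} (h𝒮 : IsFan 𝒮)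
    {v : Fin d → ℝ} {τ₁ τ₂ σ₁' σ₂' : Set (Fin d → ℝ)}
    (hτ₁ : τ₁ ∈ 𝒮) (hvτ₁ : v ∉ τ₁) (hσ₁' : σ₁' ∈ 𝒮) (hins₁ : insert v τ₁ ⊆ σ₁')
    (hτ₂ : τ₂ ∈ 𝒮) (hvτ₂ : v ∉ τ₂) (hσ₂' : σ₂' ∈ 𝒮) (hins₂ : insert v τ₂ ⊆ σ₂') :
    IsFaceOf (coneJoin τ₁ v ∩ coneJoin τ₂ v) (coneJoin τ₁ v) := by
  have hτσ₁ : τ₁ ⊆ σ₁' := (Set.insert_subset_iff.mp hins₁).2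
  have hτσ₂ : τ₂ ⊆ σ₂' := (Set.insert_subset_iff.mp hins₂).2
  have hvσ₁ : v ∈ σ₁' := hins₁ (Set.mem_insert v τ₁)
  have hvσ₂ : v ∈ σ₂' := hins₂ (Set.mem_insert v τ₂)
  obtain ⟨m₁, hm₁1, hm₁2, hm₁v, hm₁τ⟩ := fan_face_functional h𝒮 hτ₁ hσ₁' hτσ₁ hvσ₁ hvτ₁
  obtain ⟨m₂, hm₂1, hm₂2, hm₂v, hm₂τ⟩ := fan_face_functional h𝒮 hτ₂ hσ₂' hτσ₂ hvσ₂ hvτ₂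
  have hρ₁sub : coneJoin τ₁ v ⊆ σ₁' := coneJoin_subset (h𝒮.2.1 σ₁' hσ₁').1 hτσ₁ hvσ₁
  have hρ₂sub : coneJoin τ₂ v ⊆ σ₂' := coneJoin_subset (h𝒮.2.1 σ₂' hσ₂').1 hτσ₂ hvσ₂
  obtain ⟨g₁, hg₁1, hg₁2⟩ := (h𝒮.2.2.2 σ₁' hσ₁' σ₂' hσ₂').1
  obtain ⟨g₂, hg₂1, hg₂2⟩ := (h𝒮.2.2.2 σ₂' hσ₂' σ₁' hσ₁').1
  -- if y ∈ σ₁' ∩ σ₂' is written x + r v with x ∈ τ₁ then x ∈ σ₂'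
  have hcross₁ : ∀ x ∈ τ₁, ∀ r : ℝ, 0 ≤ r → x + r • v ∈ σ₁' ∩ σ₂' → x ∈ σ₂' := by
    intro x hx r hr hy
    have hgy : dotR g₁ (x + r • v) = 0 := by
      rw [hg₁2] at hy; exact hy.2
    rw [dotR_add_right, dotR_smul_right] at hgy
    have h1 : 0 ≤ dotR g₁ x := hg₁1 x (hτσ₁ hx)
    have h2 : 0 ≤ r * dotR g₁ v := mul_nonneg hr (hg₁1 v hvσ₁)
    have h3 : dotR g₁ x = 0 := by linarith
    have : x ∈ σ₁' ∩ σ₂' := by rw [hg₁2]; exact ⟨hτσ₁ hx, h3⟩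
    exact this.2
  have hcross₂ : ∀ x ∈ τ₂, ∀ r : ℝ, 0 ≤ r → x + r • v ∈ σ₂' ∩ σ₁' → x ∈ σ₁' := by
    intro x hx r hr hy
    have hgy : dotR g₂ (x + r • v) = 0 := by
      rw [hg₂2] at hy; exact hy.2
    rw [dotR_add_right, dotR_smul_right] at hgy
    have h1 : 0 ≤ dotR g₂ x := hg₂1 x (hτσ₂ hx)
    have h2 : 0 ≤ r * dotR g₂ v := mul_nonneg hr (hg₂1 v hvσ₂)
    have h3 : dotR g₂ x = 0 := by linarith
    have : x ∈ σ₂' ∩ σ₁' := by rw [hg₂2]; exact ⟨hτσ₂ hx, h3⟩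
    exact this.2
  have hkey : coneJoin τ₁ v ∩ coneJoin τ₂ v = coneJoin (τ₁ ∩ τ₂) v := by
    ext y
    constructor
    · rintro ⟨hy₁, hy₂⟩
      obtain ⟨x₁, hx₁, r₁, hr₁, hy₁e⟩ := hy₁
      obtain ⟨x₂, hx₂, r₂, hr₂, hy₂e⟩ := hy₂
      have hyσ₁ : y ∈ σ₁' := hρ₁sub ⟨x₁, hx₁, r₁, hr₁, hy₁e⟩
      have hyσ₂ : y ∈ σ₂' := hρ₂sub ⟨x₂, hx₂, r₂, hr₂, hy₂e⟩
      have hx₁σ₂ : x₁ ∈ σ₂' := by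
        refine hcross₁ x₁ hx₁ r₁ hr₁ ?_
        rw [← hy₁e]; exact ⟨hyσ₁, hyσ₂⟩
      have hx₂σ₁ : x₂ ∈ σ₁' := by
        refine hcross₂ x₂ hx₂ r₂ hr₂ ?_
        rw [← hy₂e]; exact ⟨hyσ₂, hyσ₁⟩
      -- compare r₁ r₂ via m₂ and m₁
      have e₂ : dotR m₂ y = r₂ * dotR m₂ v := by
        rw [hy₂e, dotR_add_right, dotR_smul_right, hm₂τ x₂ hx₂, zero_add]
      have e₂' : dotR m₂ y = dotR m₂ x₁ + r₁ * dotR m₂ v := by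
        rw [hy₁e, dotR_add_right, dotR_smul_right]
      have hr₂₁ : r₁ ≤ r₂ := by
        have h1 : 0 ≤ dotR m₂ x₁ := hm₂1 x₁ hx₁σ₂
        have h2 : r₁ * dotR m₂ v ≤ r₂ * dotR m₂ v := by linarith
        exact le_of_mul_le_mul_right h2 hm₂v
      have e₁ : dotR m₁ y = r₁ * dotR m₁ v := by
        rw [hy₁e, dotR_add_right, dotR_smul_right, hm₁τ x₁ hx₁, zero_add]
      have e₁' : dotR m₁ y = dotR m₁ x₂ + r₂ * dotR m₁ v := by
        rw [hy₂e, dotR_add_right, dotR_smul_right]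
      have hr₁₂ : r₂ ≤ r₁ := by
        have h1 : 0 ≤ dotR m₁ x₂ := hm₁1 x₂ hx₂σ₁
        have h2 : r₂ * dotR m₁ v ≤ r₁ * dotR m₁ v := by linarith
        exact le_of_mul_le_mul_right h2 hm₁v
      have hrr : r₁ = r₂ := le_antisymm hr₂₁ hr₁₂
      have hxx : x₁ = x₂ := by
        subst hrr
        have := hy₁e.symm.trans hy₂e
        exact add_right_cancel this
      exact ⟨x₁, ⟨hx₁, hxx ▸ hx₂⟩, r₁, hr₁, hy₁e⟩
    · rintro ⟨x, ⟨hx₁, hx₂⟩, r, hr, rfl⟩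
      exact ⟨⟨x, hx₁, r, hr, rfl⟩, ⟨x, hx₂, r, hr, rfl⟩⟩
  obtain ⟨h, hh1, hh2⟩ := (h𝒮.2.2.2 τ₁ hτ₁ τ₂ hτ₂).1
  set q : Fin d → ℝ := h - (dotR h v / dotR m₁ v) • m₁ with hqdef
  have hq : ∀ z, dotR q z = dotR h z - (dotR h v / dotR m₁ v) * dotR m₁ z := by
    intro z; rw [hqdef, dotR_sub_left, dotR_smul_left]
  have hqτ : ∀ x ∈ τ₁, dotR q x = dotR h x := fun x hx => by
    rw [hq, hm₁τ x hx]; ring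
  have hqv : dotR q v = 0 := by
    rw [hq]; field_simp; ring
  have hqrep : ∀ x ∈ τ₁, ∀ r : ℝ, dotR q (x + r • v) = dotR h x := by
    intro x hx r
    rw [dotR_add_right, dotR_smul_right, hqτ x hx, hqv, mul_zero, add_zero]
  rw [hkey]
  refine ⟨q, ?_, ?_⟩
  · rintro y ⟨x, hx, r, hr, rfl⟩
    rw [hqrep x hx r]
    exact hh1 x hx
  · ext y
    constructor
    · rintro ⟨x, ⟨hx₁, hx₂⟩, r, hr, rfl⟩
      refine ⟨⟨x, hx₁, r, hr, rfl⟩, ?_⟩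
      rw [hqrep x hx₁ r]
      have : x ∈ τ₁ ∩ τ₂ := ⟨hx₁, hx₂⟩
      rw [hh2] at this
      exact this.2
    · rintro ⟨⟨x, hx, r, hr, rfl⟩, hy0⟩
      rw [hqrep x hx r] at hy0
      have : x ∈ τ₁ ∩ τ₂ := by rw [hh2]; exact ⟨hx, hy0⟩
      exact ⟨x, this, r, hr, rfl⟩

end Star2


/-- the star subdivision of a fan `𝒮` at a nonzero lattice point `v`
of its support is again a fan, has the same support, and refines `𝒮` (every cone of
the subdivision is contained in some cone of `𝒮`). -/
theorem starSubdiv_isFan_refinement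
    {d : ℕ} (𝒮 : Set (Set (Fin d → ℝ))) (h𝒮 : IsFan 𝒮)
    (v : Fin d → ℤ) (hv : v ≠ 0) (hvsupp : zCast v ∈ ⋃₀ 𝒮) :
    IsFan (starSubdiv 𝒮 (zCast v)) ∧
    ⋃₀ starSubdiv 𝒮 (zCast v) = ⋃₀ 𝒮 ∧
    ∀ ρ ∈ starSubdiv 𝒮 (zCast v), ∃ σ ∈ 𝒮, ρ ⊆ σ := by
  set vr : Fin d → ℝ := zCast v with hvr
  have hvr0 : vr ≠ 0 := by
    intro h
    apply hv
    funext i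
    have : (v i : ℝ) = 0 := congrFun h i
    exact_mod_cast this
  -- refinement
  have href : ∀ ρ ∈ starSubdiv 𝒮 vr, ∃ σ ∈ 𝒮, ρ ⊆ σ := by
    intro ρ hρ
    rcases hρ with ⟨hρS, _⟩ | ⟨τ, hτ, hvτ, ⟨σ', hσ', hins⟩, rfl⟩
    · exact ⟨ρ, hρS, subset_rfl⟩
    · exact ⟨σ', hσ', coneJoin_subset (h𝒮.2.1 σ' hσ').1
        (Set.insert_subset_iff.mp hins).2 (hins (Set.mem_insert vr τ))⟩
  -- finiteness
  have hfin : (starSubdiv 𝒮 vr).Finite := by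
    refine Set.Finite.union (h𝒮.1.subset fun ρ hρ => hρ.1) ?_
    refine (h𝒮.1.image (fun τ => coneJoin τ vr)).subset ?_
    rintro ρ ⟨τ, hτ, _, _, rfl⟩
    exact ⟨τ, hτ, rfl⟩
  -- cone properties
  have hcone : ∀ ρ ∈ starSubdiv 𝒮 vr, IsRatPolyCone ρ ∧ ρ ∩ (-ρ) = {0} := by
    intro ρ hρ
    rcases hρ with ⟨hρS, _⟩ | ⟨τ, hτ, hvτ, ⟨σ', hσ', hins⟩, rfl⟩
    · exact h𝒮.2.1 ρ hρS
    · have hτrat := (h𝒮.2.1 τ hτ).1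
      have hσ'sc := (h𝒮.2.1 σ' hσ').2
      have hρsub : coneJoin τ vr ⊆ σ' := coneJoin_subset (h𝒮.2.1 σ' hσ').1
        (Set.insert_subset_iff.mp hins).2 (hins (Set.mem_insert vr τ))
      refine ⟨hτrat.coneJoin_zCast v, ?_⟩
      apply Set.Subset.antisymm
      · intro z hz
        have h1 : z ∈ σ' := hρsub hz.1
        have h2 : z ∈ -σ' := by
          rw [Set.mem_neg]
          exact hρsub (Set.mem_neg.mp hz.2)
        rw [← hσ'sc]
        exact ⟨h1, h2⟩
      · intro z hz
        rw [Set.mem_singleton_iff] at hz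
        subst hz
        have h0 : (0:Fin d → ℝ) ∈ coneJoin τ vr :=
          subset_coneJoin τ vr hτrat.zero_mem
        exact ⟨h0, by rw [Set.mem_neg, neg_zero]; exact h0⟩
  -- intersections
  have hint : ∀ ρ₁ ∈ starSubdiv 𝒮 vr, ∀ ρ₂ ∈ starSubdiv 𝒮 vr,
      IsFaceOf (ρ₁ ∩ ρ₂) ρ₁ ∧ IsFaceOf (ρ₁ ∩ ρ₂) ρ₂ := by
    intro ρ₁ hρ₁ ρ₂ hρ₂
    rcases hρ₁ with ⟨hρ₁S, hvρ₁⟩ | ⟨τ₁, hτ₁, hvτ₁, ⟨σ₁', hσ₁', hins₁⟩, rfl⟩ <;>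
      rcases hρ₂ with ⟨hρ₂S, hvρ₂⟩ | ⟨τ₂, hτ₂, hvτ₂, ⟨σ₂', hσ₂', hins₂⟩, rfl⟩
    · exact h𝒮.2.2.2 ρ₁ hρ₁S ρ₂ hρ₂S
    · exact starSubdiv_inter_mixed h𝒮 hρ₁S hvρ₁ hτ₂ hvτ₂ hσ₂' hins₂
    · have hmx := starSubdiv_inter_mixed h𝒮 hρ₂S hvρ₂ hτ₁ hvτ₁ hσ₁' hins₁
      constructor
      · rw [Set.inter_comm]; exact hmx.2
      · rw [Set.inter_comm]; exact hmx.1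
    · constructor
      · exact starSubdiv_inter_join h𝒮 hτ₁ hvτ₁ hσ₁' hins₁ hτ₂ hvτ₂ hσ₂' hins₂
      · rw [Set.inter_comm]
        exact starSubdiv_inter_join h𝒮 hτ₂ hvτ₂ hσ₂' hins₂ hτ₁ hvτ₁ hσ₁' hins₁
  -- support
  have hsupp : ⋃₀ starSubdiv 𝒮 vr = ⋃₀ 𝒮 := by
    apply Set.Subset.antisymm
    · rintro x ⟨ρ, hρ, hx⟩
      obtain ⟨σ, hσ, hsub⟩ := href ρ hρ
      exact ⟨σ, hσ, hsub hx⟩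
    · rintro x ⟨σ, hσ, hx⟩
      by_cases hvσ : vr ∈ σ
      · obtain ⟨m, hm1, hmv, r, hr, hyσ, hmy⟩ :=
          key_face (h𝒮.2.1 σ hσ).1 (h𝒮.2.1 σ hσ).2 hvσ hvr0 hx
        set τ := {z ∈ σ | dotR m z = 0} with hτdef
        have hτface : IsFaceOf τ σ := ⟨m, hm1, rfl⟩
        have hτS : τ ∈ 𝒮 := h𝒮.2.2.1 σ hσ τ hτface
        have hvτ : vr ∉ τ := fun h => (ne_of_gt hmv) h.2
        have hins : insert vr τ ⊆ σ :=
          Set.insert_subset_iff.mpr ⟨hvσ, fun z hz => hz.1⟩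
        refine ⟨coneJoin τ vr, Or.inr ⟨τ, hτS, hvτ, ⟨σ, hσ, hins⟩, rfl⟩, ?_⟩
        refine ⟨x - r • vr, ⟨hyσ, hmy⟩, r, hr, ?_⟩
        rw [sub_add_cancel]
      · exact ⟨σ, Or.inl ⟨hσ, hvσ⟩, hx⟩
  exact ⟨⟨hfin, hcone, starSubdiv_faceClosed h𝒮 vr, hint⟩, hsupp, href⟩
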